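/- Let B be an n×n symmetric matrix over a field F, and suppose that for some k with 1 ≤ k ≤ n − 1, every principal minor of B of order k is zero and every principal minor of B of order k + 1 is zero. Then for every j with k ≤ j ≤ n, every principal minor of B of order j is zero. -/

import Mathlib

open Matrix

/-- The minor of a square matrix `B` lying in the rows indexed by `α` and the columns
indexed by `β` (each listed in increasing order); junk value `0` if `α.card ≠ β.card`. -/
def qMinor {R : Type*} [CommRing R] {m : Type*} [Fintype m] [LinearOrder m]
    (B : Matrix m m R) (α β : Finset m) : R :=
  if h : β.card = α.card then
    (Matrix.of fun i j : Fin α.card =>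
      B (α.orderEmbOfFin rfl i) (β.orderEmbOfFin h j)).det
  else 0

/-- `α` and `β` index a quasi-principal submatrix of order `k`, i.e.
`|α| = |β| = k` and `k - 1 ≤ |α ∩ β| (≤ k)`. -/
def IsQPPair {m : Type*} [DecidableEq m] (k : ℕ) (α β : Finset m) : Prop :=
  α.card = k ∧ β.card = k ∧ k - 1 ≤ (α ∩ β).card

/-- All quasi-principal minors of `B` of order `k` are nonzero. -/
def QPAllNonzero {R : Type*} [CommRing R] {m : Type*} [Fintype m] [LinearOrder m]
    (B : Matrix m m R) (k : ℕ) : Prop :=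
  ∀ α β : Finset m, IsQPPair k α β → qMinor B α β ≠ 0

/-- All quasi-principal minors of `B` of order `k` are zero. -/
def QPAllZero {R : Type*} [CommRing R] {m : Type*} [Fintype m] [LinearOrder m]
    (B : Matrix m m R) (k : ℕ) : Prop :=
  ∀ α β : Finset m, IsQPPair k α β → qMinor B α β = 0

/-- The three possible letters of a qpr-sequence. -/
inductive QPR : Type
  | A
  | S
  | N
deriving DecidableEq

open Classical in
/-- The letter of the qpr-sequence of `B` corresponding to order `k`:
`A` if all quasi-principal minors of order `k` are nonzero, `N` if all are zero,
and `S` otherwise. -/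
noncomputable def qprEntry {R : Type*} [CommRing R] {m : Type*} [Fintype m] [LinearOrder m]
    (B : Matrix m m R) (k : ℕ) : QPR :=
  if QPAllNonzero B k then QPR.A
  else if QPAllZero B k then QPR.N
  else QPR.S

/-- A sequence of letters `q 0, …, q (n-1)` (standing for `q_1 ⋯ q_n`) is attainable
over `F` if it is the qpr-sequence of an `n × n` symmetric matrix over `F`. -/
def Attainable (F : Type*) [Field F] {n : ℕ} (q : Fin n → QPR) : Prop :=
  ∃ B : Matrix (Fin n) (Fin n) F, B.IsSymm ∧ ∀ k : Fin n, qprEntry B ((k : ℕ) + 1) = q k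

/-- The Schur complement `B/B[γ] = B[γᶜ] - B[γᶜ, γ] B[γ]⁻¹ B[γ, γᶜ]`,
with rows and columns indexed by `γᶜ` (indexing inherited from `B`). -/
noncomputable def schurCompl {R : Type*} [CommRing R] {n : ℕ}
    (B : Matrix (Fin n) (Fin n) R) (γ : Finset (Fin n)) :
    Matrix ↥(γᶜ) ↥(γᶜ) R :=
  B.submatrix (fun i : ↥(γᶜ) => (i : Fin n)) (fun j : ↥(γᶜ) => (j : Fin n)) -
    B.submatrix (fun i : ↥(γᶜ) => (i : Fin n)) (fun j : ↥γ => (j : Fin n)) *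
      (B.submatrix (fun i : ↥γ => (i : Fin n)) fun j : ↥γ => (j : Fin n))⁻¹ *
      B.submatrix (fun i : ↥γ => (i : Fin n)) fun j : ↥(γᶜ) => (j : Fin n)

/-- The `(m+1) × (m+1)` matrix with block form `[[A, x], [yᵀ, b]]`. -/
def borderMat {R : Type*} [CommRing R] {m : ℕ} (A : Matrix (Fin m) (Fin m) R)
    (x y : Fin m → R) (b : R) : Matrix (Fin (m + 1)) (Fin (m + 1)) R :=
  Matrix.of fun i j =>
    if hi : (i : ℕ) < m then
      if hj : (j : ℕ) < m then A ⟨i, hi⟩ ⟨j, hj⟩ else x ⟨i, hi⟩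
    else
      if hj : (j : ℕ) < m then y ⟨j, hj⟩ else b

section Aux

variable {F : Type*} [Field F] {ι : Type*} [Fintype ι] [DecidableEq ι]

/-- If all columns of `N` outside `S` are identity columns, then `det N` equals the
determinant of the principal submatrix on `S`. -/
lemma det_eq_det_submatrix_of_id_cols (N : Matrix ι ι F) (S : Finset ι)
    (hN : ∀ r c, c ∉ S → N r c = if r = c then 1 else 0) :
    N.det = (N.submatrix (Subtype.val : ↥S → ι) Subtype.val).det := by
  classical
  let e : ↥S ⊕ ↥(Sᶜ) ≃ ι :=
    (Equiv.sumCongr (Equiv.refl ↥S)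
      (Equiv.subtypeEquivRight (fun x => Finset.mem_compl))).trans
      (Equiv.sumCompl (· ∈ S))
  rw [← Matrix.det_submatrix_equiv_self e N]
  have hblock : N.submatrix e e =
      Matrix.fromBlocks (N.submatrix Subtype.val Subtype.val) 0
        (N.submatrix Subtype.val Subtype.val) 1 := by
    ext i j
    rcases i with i | i <;> rcases j with j | j
    · rfl
    · have hj : (j : ι) ∉ S := Finset.mem_compl.mp j.2
      have h1 : (N.submatrix e e) (Sum.inl i) (Sum.inr j) = N i j := rfl
      have h2 : N i j = if (i : ι) = (j : ι) then 1 else 0 := hN _ _ hj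
      have hne : (i : ι) ≠ (j : ι) := fun h => hj (h ▸ i.2)
      rw [h1, Matrix.fromBlocks_apply₁₂, h2, if_neg hne]
      rfl
    · rfl
    · have hj : (j : ι) ∉ S := Finset.mem_compl.mp j.2
      have h1 : (N.submatrix e e) (Sum.inr i) (Sum.inr j) = N i j := rfl
      have h2 : N i j = if (i : ι) = (j : ι) then 1 else 0 := hN _ _ hj
      rw [h1, Matrix.fromBlocks_apply₂₂, h2, Matrix.one_apply]
      by_cases h : i = j
      · simp [h]
      · have hne : (i : ι) ≠ (j : ι) := fun hh => h (Subtype.ext hh)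
        simp [h, hne]
  rw [hblock, Matrix.det_fromBlocks_zero₁₂, Matrix.det_one, mul_one]

/-- Jacobi's identity for principal minors of the inverse. -/
lemma jacobi_principal (M : Matrix ι ι F) (hM : IsUnit M.det) (S : Finset ι) :
    M.det * ((M⁻¹).submatrix (Subtype.val : ↥S → ι) Subtype.val).det
      = (M.submatrix (Subtype.val : ↥(Sᶜ) → ι) Subtype.val).det := by
  classical
  set C : Matrix ι ι F :=
    Matrix.of fun r c => if c ∈ S then M⁻¹ r c else if r = c then (1 : F) else 0 with hC
  have hMC : ∀ r c, (M * C) r c = if c ∈ S then (if r = c then (1:F) else 0) else M r c := by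
    intro r c
    by_cases h : c ∈ S
    · have : (M * C) r c = (M * M⁻¹) r c := by
        simp only [Matrix.mul_apply, hC, Matrix.of_apply, h, if_true]
      rw [this, Matrix.mul_nonsing_inv _ hM]
      simp [Matrix.one_apply, h]
    · simp [Matrix.mul_apply, hC, h, mul_ite]
  have hdetC : C.det = ((M⁻¹).submatrix (Subtype.val : ↥S → ι) Subtype.val).det := by
    have := det_eq_det_submatrix_of_id_cols C S (fun r c hc => by simp [hC, hc])
    rw [this]
    congr 1
    ext i j
    simp [hC, j.2]
  have hdetMC : (M * C).det = (M.submatrix (Subtype.val : ↥(Sᶜ) → ι) Subtype.val).det := by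
    have h1 := det_eq_det_submatrix_of_id_cols (M * C) Sᶜ (fun r c hc => by
      rw [hMC]
      simp only [Finset.mem_compl, not_not] at hc
      simp [hc])
    rw [h1]
    congr 1
    ext i j
    have hj : (j : ι) ∉ S := Finset.mem_compl.mp j.2
    simp [hMC, hj]
  rw [← hdetMC, Matrix.det_mul, hdetC]

end Aux


section Main

variable {F : Type*} [Field F] {n : ℕ}

lemma qMinor_self (B : Matrix (Fin n) (Fin n) F) (γ : Finset (Fin n)) :
    qMinor B γ γ = (B.submatrix (Subtype.val : ↥γ → Fin n) Subtype.val).det := by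
  classical
  rw [qMinor, dif_pos rfl]
  have hbij : Function.Bijective
      (fun i : Fin γ.card => (⟨γ.orderEmbOfFin rfl i, γ.orderEmbOfFin_mem rfl i⟩ : ↥γ)) := by
    rw [Fintype.bijective_iff_injective_and_card]
    constructor
    · intro a b hab
      exact (γ.orderEmbOfFin rfl).injective (by simpa [Subtype.ext_iff] using hab)
    · simp [Fintype.card_coe]
  let e : Fin γ.card ≃ ↥γ := Equiv.ofBijective _ hbij
  rw [← Matrix.det_submatrix_equiv_self e (B.submatrix Subtype.val Subtype.val)]
  rfl

lemma det_submatrix_comp (B : Matrix (Fin n) (Fin n) F) {κ : Type*} [Fintype κ] [DecidableEq κ]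
    (f : κ → Fin n) (hf : Function.Injective f) :
    (B.submatrix f f).det = qMinor B (Finset.univ.image f) (Finset.univ.image f) := by
  classical
  rw [qMinor_self]
  set δ := Finset.univ.image f with hδ
  have hmem : ∀ x : κ, f x ∈ δ := fun x => Finset.mem_image_of_mem f (Finset.mem_univ x)
  have hbij : Function.Bijective (fun x : κ => (⟨f x, hmem x⟩ : ↥δ)) := by
    rw [Fintype.bijective_iff_injective_and_card]
    constructor
    · intro a b hab
      exact hf (by simpa [Subtype.ext_iff] using hab)
    · rw [Fintype.card_coe, hδ, Finset.card_image_of_injective _ hf, Finset.card_univ]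
  let e : κ ≃ ↥δ := Equiv.ofBijective _ hbij
  rw [← Matrix.det_submatrix_equiv_self e (B.submatrix Subtype.val Subtype.val)]
  rfl

end Main

/-- the `NN` Theorem: if every principal minor of a symmetric matrix `B`
of order `k` is zero and every principal minor of order `k + 1` is zero
(`1 ≤ k ≤ n - 1`), then every principal minor of `B` of each order `j` with
`k ≤ j ≤ n` is zero. -/
theorem stmt_17 {F : Type*} [Field F] {n : ℕ} (B : Matrix (Fin n) (Fin n) F)
    (hB : B.IsSymm) (k : ℕ) (hk1 : 1 ≤ k) (hk2 : k ≤ n - 1)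
    (hzero : ∀ γ : Finset (Fin n), γ.card = k → qMinor B γ γ = 0)
    (hzero' : ∀ γ : Finset (Fin n), γ.card = k + 1 → qMinor B γ γ = 0) :
    ∀ j : ℕ, k ≤ j → j ≤ n →
      ∀ γ : Finset (Fin n), γ.card = j → qMinor B γ γ = 0 := by
  classical
  intro j
  induction j using Nat.strong_induction_on with
  | _ j IH =>
    intro hkj hjn γ hγ
    by_cases h1 : j = k
    · exact hzero γ (h1 ▸ hγ)
    by_cases h2 : j = k + 1
    · exact hzero' γ (h2 ▸ hγ)
    obtain ⟨t, rfl⟩ : ∃ t, j = t + 2 := ⟨j - 2, by omega⟩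
    have hkt : k ≤ t := by omega
    rw [qMinor_self]
    by_contra hdet
    set M : Matrix ↥γ ↥γ F := B.submatrix Subtype.val Subtype.val with hM
    have hMu : IsUnit M.det := isUnit_iff_ne_zero.mpr hdet
    have hcard : Fintype.card ↥γ = t + 2 := by rw [Fintype.card_coe, hγ]
    -- every square submatrix of M on an index set of admissible size has zero determinant
    have minorFact : ∀ T : Finset ↥γ, k ≤ T.card → T.card < t + 2 →
        (M.submatrix (Subtype.val : ↥T → ↥γ) Subtype.val).det = 0 := by
      intro T hT1 hT2
      have hinj : Function.Injective (fun x : ↥T => ((x : ↥γ) : Fin n)) := by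
        intro a b hab
        exact Subtype.ext (Subtype.ext hab)
      have heq : M.submatrix (Subtype.val : ↥T → ↥γ) Subtype.val
          = B.submatrix (fun x : ↥T => ((x : ↥γ) : Fin n))
              (fun x : ↥T => ((x : ↥γ) : Fin n)) := rfl
      rw [heq, det_submatrix_comp B _ hinj]
      set δ := Finset.univ.image (fun x : ↥T => ((x : ↥γ) : Fin n)) with hδ
      have hδc : δ.card = T.card := by
        rw [hδ, Finset.card_image_of_injective _ hinj, Finset.card_univ, Fintype.card_coe]
      exact IH T.card (by omega) (by omega) (by omega) δ hδc
    -- diagonal entries of M⁻¹ vanish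
    have hdiag : ∀ i : ↥γ, M⁻¹ i i = 0 := by
      intro i
      have hj := jacobi_principal M hMu {i}
      have hrhs : (M.submatrix (Subtype.val : ↥(({i} : Finset ↥γ)ᶜ) → ↥γ) Subtype.val).det = 0 := by
        apply minorFact
        · rw [Finset.card_compl, Finset.card_singleton, hcard]; omega
        · rw [Finset.card_compl, Finset.card_singleton, hcard]; omega
      rw [hrhs] at hj
      have hsingle : ((M⁻¹).submatrix (Subtype.val : ↥({i} : Finset ↥γ) → ↥γ) Subtype.val).det
          = M⁻¹ i i := by
        let e : Fin 1 ≃ ↥({i} : Finset ↥γ) :=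
          { toFun := fun _ => ⟨i, Finset.mem_singleton_self i⟩
            invFun := fun _ => 0
            left_inv := fun x => by fin_cases x <;> rfl
            right_inv := fun x => by
              rcases x with ⟨x, hx⟩
              simp only [Finset.mem_singleton] at hx
              subst hx; rfl }
        rw [← Matrix.det_submatrix_equiv_self e
          ((M⁻¹).submatrix (Subtype.val : ↥({i} : Finset ↥γ) → ↥γ) Subtype.val)]
        rw [Matrix.det_fin_one]
        rfl
      rw [hsingle] at hj
      rcases mul_eq_zero.mp hj with h | h
      · exact absurd h hdet
      · exact h
    -- M⁻¹ is symmetric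
    have hMsymm : Mᵀ = M := by
      rw [hM]
      ext a b
      simp [Matrix.transpose_apply, Matrix.submatrix_apply]
      exact congrFun (congrFun hB _) _
    have hinvsymm : ∀ a b : ↥γ, M⁻¹ a b = M⁻¹ b a := by
      intro a b
      have : (M⁻¹)ᵀ = M⁻¹ := by rw [Matrix.transpose_nonsing_inv, hMsymm]
      calc M⁻¹ a b = (M⁻¹)ᵀ b a := rfl
        _ = M⁻¹ b a := by rw [this]
    -- off-diagonal entries of M⁻¹ vanish
    have hoff : ∀ a b : ↥γ, a ≠ b → M⁻¹ a b = 0 := by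
      intro a b hab
      have hj := jacobi_principal M hMu {a, b}
      have hpair : ({a, b} : Finset ↥γ).card = 2 := Finset.card_pair hab
      have hrhs : (M.submatrix (Subtype.val : ↥(({a, b} : Finset ↥γ)ᶜ) → ↥γ) Subtype.val).det
          = 0 := by
        apply minorFact
        · rw [Finset.card_compl, hpair, hcard]; omega
        · rw [Finset.card_compl, hpair, hcard]; omega
      rw [hrhs] at hj
      have hmema : a ∈ ({a, b} : Finset ↥γ) := by simp
      have hmemb : b ∈ ({a, b} : Finset ↥γ) := by simp
      have h2det : ((M⁻¹).submatrix (Subtype.val : ↥({a, b} : Finset ↥γ) → ↥γ) Subtype.val).det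
          = M⁻¹ a a * M⁻¹ b b - M⁻¹ a b * M⁻¹ b a := by
        let e : Fin 2 ≃ ↥({a, b} : Finset ↥γ) :=
          { toFun := ![⟨a, hmema⟩, ⟨b, hmemb⟩]
            invFun := fun x => if (x : ↥γ) = a then 0 else 1
            left_inv := fun x => by
              fin_cases x
              · simp
              · simp [hab.symm]
            right_inv := fun x => by
              rcases x with ⟨x, hx⟩
              simp only [Finset.mem_insert, Finset.mem_singleton] at hx
              rcases hx with rfl | rfl
              · simp
              · simp [hab.symm] }
        rw [← Matrix.det_submatrix_equiv_self e
          ((M⁻¹).submatrix (Subtype.val : ↥({a, b} : Finset ↥γ) → ↥γ) Subtype.val)]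
        rw [Matrix.det_fin_two]
        rfl
      rw [h2det, hdiag a, hdiag b, hinvsymm b a] at hj
      have : M⁻¹ a b * M⁻¹ a b = 0 := by
        have := mul_eq_zero.mp hj
        rcases this with h | h
        · exact absurd h hdet
        · linear_combination -h
      exact mul_self_eq_zero.mp this
    -- hence M⁻¹ = 0, contradicting invertibility
    have hzero : M⁻¹ = 0 := by
      ext a b
      by_cases h : a = b
      · subst h; simp [hdiag a]
      · simp [hoff a b h]
    have hne : Nonempty ↥γ := by
      rw [← Fintype.card_pos_iff, hcard]; omega
    have : M⁻¹.det = 0 := by rw [hzero]; exact Matrix.det_zero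
    rw [Matrix.det_nonsing_inv, Ring.inverse_eq_inv'] at this
    exact hdet (inv_eq_zero.mp this)
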